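/- Let ι : ℚ(X) → ℚ(X) be the unique ℚ-algebra field homomorphism of the field ℚ(X) of rational functions in one variable (RatFunc ℚ) satisfying ι(X) = X⁻¹, and set w := X/(X² + 4X + 1) ∈ ℚ(X). Then for every f ∈ ℚ(X): ι(f) = f if and only if there exist polynomials P, Q ∈ ℚ[t] with Q ≠ 0 such that f = P(w)/Q(w). (In the paper's language: a function is rational in z if and only if it is rational and symmetric in D, where z = 1/(D⁻¹ + 4 + D).) -/

import Mathlib

open Polynomial RatFunc

theorem rational_in_z_iff_rational_symmetric_in_D
    (ι : RatFunc ℚ →ₐ[ℚ] RatFunc ℚ) (hι : ι RatFunc.X = (RatFunc.X)⁻¹)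
    (w : RatFunc ℚ) (hw : w = RatFunc.X / (RatFunc.X ^ 2 + 4 * RatFunc.X + 1))
    (f : RatFunc ℚ) :
    ι f = f ↔
      ∃ P Q : Polynomial ℚ, Q ≠ 0 ∧ f = Polynomial.aeval w P / Polynomial.aeval w Q := by
  have hX : (RatFunc.X : RatFunc ℚ) ≠ 0 := RatFunc.X_ne_zero
  -- the denominator polynomial is nonzero
  have hdenpoly : (Polynomial.X ^ 2 + 4 * Polynomial.X + 1 : ℚ[X]) ≠ 0 := by
    intro h
    have := congrArg (Polynomial.eval 0) h
    simp at this
  have hdenmap : algebraMap ℚ[X] (RatFunc ℚ) (Polynomial.X ^ 2 + 4 * Polynomial.X + 1)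
      = RatFunc.X ^ 2 + 4 * RatFunc.X + 1 := by
    push_cast [map_add, map_mul, map_pow, map_one, map_ofNat, RatFunc.algebraMap_X]
    ring
  have hden : (RatFunc.X ^ 2 + 4 * RatFunc.X + 1 : RatFunc ℚ) ≠ 0 := by
    rw [← hdenmap]
    exact RatFunc.algebraMap_ne_zero hdenpoly
  have hw0 : w ≠ 0 := by rw [hw]; exact div_ne_zero hX hden
  have hinj : Function.Injective ι := ι.toRingHom.injective
  -- ι w = w
  have hιw : ι w = w := by
    rw [hw, map_div₀, hι, map_add, map_add, map_mul, map_pow, hι]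
    have h4 : ι 4 = 4 := by simpa using ι.commutes 4
    have h1 : ι 1 = 1 := map_one ι
    rw [h4, h1]
    have hdeninv : ((RatFunc.X)⁻¹ ^ 2 + 4 * (RatFunc.X)⁻¹ + 1 : RatFunc ℚ) ≠ 0 := by
      intro h
      apply hden
      have := congrArg (· * RatFunc.X ^ 2) h
      simp only [add_mul, zero_mul] at this
      field_simp at this
      have h3 : (RatFunc.X * (RatFunc.X ^ 2 + 4 * RatFunc.X + 1) : RatFunc ℚ) = 0 := by
        linear_combination RatFunc.X * this
      rcases mul_eq_zero.mp h3 with h' | h'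
      · exact absurd h' hX
      · exact h'
    rw [div_eq_div_iff hdeninv hden]
    field_simp
    ring
  constructor
  · -- hard direction
    intro hf
    set u : RatFunc ℚ := RatFunc.X + (RatFunc.X)⁻¹ with hu
    have hιu : ι u = u := by
      rw [hu, map_add, hι, map_inv₀, hι, inv_inv, add_comm]
    have hX2 : RatFunc.X ^ 2 = u * RatFunc.X - 1 := by
      rw [hu, add_mul, inv_mul_cancel₀ hX]; ring
    have hXXinv : ((RatFunc.X)⁻¹ - RatFunc.X : RatFunc ℚ) ≠ 0 := by
      intro h
      have h2 : (RatFunc.X ^ 2 - 1 : RatFunc ℚ) = 0 := by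
        have := congrArg (· * RatFunc.X) h
        field_simp at this
        linear_combination -this
      have : algebraMap ℚ[X] (RatFunc ℚ) (Polynomial.X ^ 2 - 1) = 0 := by
        rw [map_sub, map_pow, map_one, RatFunc.algebraMap_X]; exact h2
      have hp : (Polynomial.X ^ 2 - 1 : ℚ[X]) ≠ 0 := by
        intro h'
        have := congrArg (Polynomial.eval 0) h'
        simp at this
      exact RatFunc.algebraMap_ne_zero hp this
    set K := IntermediateField.adjoin ℚ ({u} : Set (RatFunc ℚ)) with hK
    -- ι fixes K pointwise
    have hfix : ∀ y ∈ K, ι y = y := by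
      intro y hy
      induction hy using IntermediateField.adjoin_induction with
      | mem x hx => rw [Set.mem_singleton_iff] at hx; rw [hx]; exact hιu
      | algebraMap x => exact ι.commutes x
      | add x y _ _ hx hy => rw [map_add, hx, hy]
      | inv x _ hx => rw [map_inv₀, hx]
      | mul x y _ _ hx hy => rw [map_mul, hx, hy]
    -- every element of RatFunc ℚ is a + b * X with a b ∈ K
    have hXtop : ∀ g : RatFunc ℚ, g ∈ IntermediateField.adjoin ℚ ({RatFunc.X} : Set (RatFunc ℚ)) := by
      intro g
      rw [IntermediateField.mem_adjoin_simple_iff]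
      refine ⟨g.num, g.denom, ?_⟩
      have haev : ∀ p : ℚ[X], Polynomial.aeval RatFunc.X p = algebraMap ℚ[X] (RatFunc ℚ) p := by
        intro p
        rw [← RatFunc.algebraMap_X, Polynomial.aeval_algebraMap_apply,
          Polynomial.aeval_X_left_apply]
      rw [haev, haev, RatFunc.num_div_denom]
    have hrep : ∀ g : RatFunc ℚ, ∃ a b, a ∈ K ∧ b ∈ K ∧ g = a + b * RatFunc.X := by
      intro g
      induction hXtop g using IntermediateField.adjoin_induction with
      | mem x hx =>
        rw [Set.mem_singleton_iff] at hx
        exact ⟨0, 1, zero_mem K, one_mem K, by rw [hx]; ring⟩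
      | algebraMap x => exact ⟨algebraMap ℚ _ x, 0, K.algebraMap_mem x, zero_mem K, by ring⟩
      | add x y _ _ hx hy =>
        obtain ⟨a, b, ha, hb, rfl⟩ := hx
        obtain ⟨c, d, hc, hd, rfl⟩ := hy
        exact ⟨a + c, b + d, add_mem ha hc, add_mem hb hd, by ring⟩
      | mul x y _ _ hx hy =>
        obtain ⟨a, b, ha, hb, rfl⟩ := hx
        obtain ⟨c, d, hc, hd, rfl⟩ := hy
        have huK : u ∈ K := IntermediateField.mem_adjoin_simple_self ℚ u
        refine ⟨a * c - b * d, a * d + b * c + b * d * u,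
          sub_mem (mul_mem ha hc) (mul_mem hb hd),
          add_mem (add_mem (mul_mem ha hd) (mul_mem hb hc)) (mul_mem (mul_mem hb hd) huK), ?_⟩
        linear_combination b * d * hX2
      | inv x _ hx =>
        obtain ⟨a, b, ha, hb, rfl⟩ := hx
        by_cases h0 : a + b * RatFunc.X = 0
        · exact ⟨0, 0, zero_mem K, zero_mem K, by rw [h0]; simp⟩
        · have huK : u ∈ K := IntermediateField.mem_adjoin_simple_self ℚ u
          set n : RatFunc ℚ := a ^ 2 + a * b * u + b ^ 2 with hn
          have hnK : n ∈ K := by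
            refine add_mem (add_mem (pow_mem ha 2) (mul_mem (mul_mem ha hb) huK)) (pow_mem hb 2)
          have hconj : ι (a + b * RatFunc.X) = a + b * u - b * RatFunc.X := by
            rw [map_add, map_mul, hι, hfix a ha, hfix b hb, hu]
            ring
          have hprod : (a + b * RatFunc.X) * (a + b * u - b * RatFunc.X) = n := by
            rw [hn]
            linear_combination (-(b^2)) * hX2
          have hn0 : n ≠ 0 := by
            rw [← hprod]
            exact mul_ne_zero h0 (by rw [← hconj]; exact fun h => h0 (hinj (by simpa using h)))
          refine ⟨(a + b * u) / n, -b / n, div_mem (add_mem ha (mul_mem hb huK)) hnK,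
            div_mem (neg_mem hb) hnK, ?_⟩
          have hone : ((a + b * u) / n + -b / n * RatFunc.X) * (a + b * RatFunc.X) = 1 := by
            field_simp
            linear_combination hprod
          exact (eq_inv_of_mul_eq_one_left hone).symm
    -- conclude f ∈ K
    obtain ⟨a, b, ha, hb, hab⟩ := hrep f
    have hιf : ι f = a + b * (RatFunc.X)⁻¹ := by
      rw [hab, map_add, map_mul, hι, hfix a ha, hfix b hb]
    have hb0 : b = 0 := by
      have := hf
      rw [hιf, hab] at this
      have h2 : b * ((RatFunc.X)⁻¹ - RatFunc.X) = 0 := by linear_combination this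
      rcases mul_eq_zero.mp h2 with h | h
      · exact h
      · exact absurd h hXXinv
    have hfK : f ∈ K := by rw [hab, hb0]; simpa using ha
    -- K ≤ ℚ⟮w⟯
    have huw : u = w⁻¹ - 4 := by
      rw [hw, inv_div, hu]
      field_simp
      ring
    have hfW : f ∈ IntermediateField.adjoin ℚ ({w} : Set (RatFunc ℚ)) := by
      have hle : K ≤ IntermediateField.adjoin ℚ ({w} : Set (RatFunc ℚ)) := by
        rw [hK, IntermediateField.adjoin_le_iff, Set.singleton_subset_iff]
        have hwmem : w ∈ IntermediateField.adjoin ℚ ({w} : Set (RatFunc ℚ)) :=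
          IntermediateField.mem_adjoin_simple_self ℚ w
        rw [huw]
        exact sub_mem (inv_mem hwmem) (ofNat_mem _ 4)
      exact hle hfK
    rw [IntermediateField.mem_adjoin_simple_iff] at hfW
    obtain ⟨r, s, hrs⟩ := hfW
    by_cases hs : Polynomial.aeval w s = 0
    · refine ⟨0, 1, one_ne_zero, ?_⟩
      rw [hrs, hs, div_zero]
      simp
    · refine ⟨r, s, fun h => hs (by rw [h]; simp), hrs⟩
  · -- easy direction
    rintro ⟨P, Q, hQ, rfl⟩
    rw [map_div₀, ← Polynomial.aeval_algHom_apply, ← Polynomial.aeval_algHom_apply, hιw]
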